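/- Let n ≥ 2 and let H be a 2n×2n complex Hermitian matrix. Then for every integer m with 1 ≤ m < n there exists a real 2n×2n matrix Q that is both orthogonal (Q·Qᵀ = 1) and symplectic (Q·Ω_n·Qᵀ = Ω_n) such that the smallest eigenvalue of the Hermitian matrix (i/2)Ω_n + H equals the smallest eigenvalue of the Hermitian matrix ((i/2)Ω_{n−m} ⊕ (1/2)·1_{2m}) + Q·H·Qᵀ, where (i/2)Ω_{n−m} ⊕ (1/2)·1_{2m} denotes the block-diagonal matrix with blocks (i/2)Ω_{n−m} and half the 2m×2m identity. -/

import Mathlib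

open Matrix ComplexOrder

/-- The `2n × 2n` symplectic form matrix `Ω_n`, block diagonal with `n` copies
of `[[0,1],[-1,0]]`. -/
def Omega (n : ℕ) : Matrix (Fin (2*n)) (Fin (2*n)) ℝ :=
  Matrix.of fun i j =>
    if (i : ℕ) + 1 = (j : ℕ) ∧ (i : ℕ) % 2 = 0 then 1
    else if (j : ℕ) + 1 = (i : ℕ) ∧ (j : ℕ) % 2 = 0 then -1 else 0

/-- Entrywise coercion of a real matrix to a complex matrix. -/
def cC {m : Type*} (M : Matrix m m ℝ) : Matrix m m ℂ := M.map (fun x => (x : ℂ))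

set_option linter.unnecessarySeqFocus false
set_option linter.unusedSectionVars false
set_option linter.unreachableTactic false
set_option linter.unusedTactic false
set_option maxHeartbeats 1000000

namespace SER


def pe (n : ℕ) : Fin n × Fin 2 ≃ Fin (2*n) where
  toFun p := ⟨2 * p.1 + p.2, by omega⟩
  invFun i := (⟨(i : ℕ) / 2, by omega⟩, ⟨(i : ℕ) % 2, by omega⟩)
  left_inv p := by
    ext
    · simp; omega
    · simp; omega
  right_inv i := by ext; simp; omega

lemma pe_val {n : ℕ} (k : Fin n) (s : Fin 2) :
    ((pe n (k, s) : Fin (2*n)) : ℕ) = 2 * (k : ℕ) + (s : ℕ) := rfl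

lemma pe_val' {n : ℕ} (k : Fin n) (s : Fin 2) :
    ((pe n (k, s) : Fin (2*n)) : ℕ) = 2 * (k : ℕ) + (s : ℕ) := (pe_val k s).trans rfl



def M2 (z : ℂ) : Matrix (Fin 2) (Fin 2) ℝ := !![z.re, -z.im; z.im, z.re]

lemma M2_mul (z w : ℂ) : M2 z * M2 w = M2 (z * w) := by
  ext s t
  fin_cases s <;> fin_cases t <;>
    simp [M2, Matrix.mul_apply, Fin.sum_univ_two, Complex.mul_re, Complex.mul_im] <;> ring

lemma M2_one : M2 1 = 1 := by
  ext s t; fin_cases s <;> fin_cases t <;> simp [M2]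

lemma M2_conj (z : ℂ) : M2 ((starRingEnd ℂ) z) = (M2 z)ᵀ := by
  ext s t; fin_cases s <;> fin_cases t <;> simp [M2]

lemma M2_sum {ι : Type*} (s : Finset ι) (f : ι → ℂ) :
    M2 (∑ i ∈ s, f i) = ∑ i ∈ s, M2 (f i) := by
  ext u t
  rw [Matrix.sum_apply]
  fin_cases u <;> fin_cases t <;>
    simp [M2, Complex.re_sum, Complex.im_sum]

/-- real representation on the product index -/
def Rm {n : ℕ} (U : Matrix (Fin n) (Fin n) ℂ) : Matrix (Fin n × Fin 2) (Fin n × Fin 2) ℝ :=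
  Matrix.of fun p q => M2 (U p.1 q.1) p.2 q.2

lemma Rm_mul {n : ℕ} (U V : Matrix (Fin n) (Fin n) ℂ) : Rm U * Rm V = Rm (U * V) := by
  ext ⟨k, s⟩ ⟨l, t⟩
  rw [Matrix.mul_apply]
  rw [Fintype.sum_prod_type]
  have : ∀ j : Fin n, ∑ u : Fin 2, Rm U (k, s) (j, u) * Rm V (j, u) (l, t)
      = M2 (U k j * V j l) s t := by
    intro j
    rw [← M2_mul, Matrix.mul_apply]
    simp [Rm]
  rw [Finset.sum_congr rfl fun j _ => this j]
  show _ = M2 (∑ j, U k j * V j l) s t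
  rw [M2_sum]
  rw [Matrix.sum_apply]

lemma Rm_transpose {n : ℕ} (U : Matrix (Fin n) (Fin n) ℂ) : (Rm U)ᵀ = Rm Uᴴ := by
  ext ⟨k, s⟩ ⟨l, t⟩
  show Rm U (l, t) (k, s) = M2 ((starRingEnd ℂ) (U l k)) s t
  rw [M2_conj]
  rfl

lemma Rm_one {n : ℕ} : Rm (1 : Matrix (Fin n) (Fin n) ℂ) = 1 := by
  ext ⟨k, s⟩ ⟨l, t⟩
  simp only [Rm, Matrix.of_apply]
  by_cases h : k = l
  · subst h
    simp only [Matrix.one_apply_eq, M2_one]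
    by_cases hst : s = t
    · subst hst; simp
    · rw [Matrix.one_apply_ne hst, Matrix.one_apply_ne (by simp [Prod.ext_iff, hst])]
  · rw [Matrix.one_apply_ne h, Matrix.one_apply_ne (by simp [Prod.ext_iff, h])]
    fin_cases s <;> fin_cases t <;> simp [M2]

lemma Omega_eq (n : ℕ) :
    Omega n = Matrix.reindex (pe n) (pe n) (Rm ((-Complex.I) • (1 : Matrix (Fin n) (Fin n) ℂ))) := by
  ext i j
  obtain ⟨⟨k, s⟩, rfl⟩ := (pe n).surjective i
  obtain ⟨⟨l, t⟩, rfl⟩ := (pe n).surjective j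
  rw [Matrix.reindex_apply, Matrix.submatrix_apply, Equiv.symm_apply_apply,
    Equiv.symm_apply_apply]
  show Omega n _ _ = M2 (((-Complex.I) • (1 : Matrix (Fin n) (Fin n) ℂ)) k l) s t
  by_cases h : k = l
  · subst h
    rw [Matrix.smul_apply, Matrix.one_apply_eq]
    fin_cases s <;> fin_cases t <;>
      simp [Omega, M2, pe_val] <;> omega
  · rw [Matrix.smul_apply, Matrix.one_apply_ne h]
    have hkl : (k : ℕ) ≠ l := fun hh => h (Fin.ext hh)
    have hO : Omega n (pe n (k, s)) (pe n (l, t)) = 0 := by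
      simp only [Omega, Matrix.of_apply, pe_val']
      have hs := s.isLt; have ht := t.isLt
      split_ifs with h1 h2
      · exfalso; omega
      · exfalso; omega
      · rfl
    rw [hO]
    fin_cases s <;> fin_cases t <;> simp [M2]

noncomputable def Tm : Matrix (Fin 2) (Fin 2) ℂ := !![1/2, -Complex.I/2; Complex.I/2, 1/2]

variable {n m : ℕ} (hm : 1 ≤ m) (hmn : m < n) (hEq : 2*(n-m) + 2*m = 2*n)

lemma e2_symm_lt (i : Fin (2*n)) (hlt : (i:ℕ) < 2*(n-m)) :
    (finSumFinEquiv.trans (finCongr hEq)).symm i = Sum.inl ⟨i, hlt⟩ := by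
  rw [Equiv.symm_apply_eq]
  apply Fin.ext
  simp

lemma e2_symm_ge (i : Fin (2*n)) (hge : 2*(n-m) ≤ (i:ℕ)) :
    (finSumFinEquiv.trans (finCongr hEq)).symm i = Sum.inr ⟨(i:ℕ) - 2*(n-m), by omega⟩ := by
  rw [Equiv.symm_apply_eq]
  apply Fin.ext
  simp
  omega

noncomputable def Smat (n m : ℕ) (hEq : 2*(n-m) + 2*m = 2*n) :
    Matrix (Fin (2*n)) (Fin (2*n)) ℂ :=
  Matrix.reindex (finSumFinEquiv.trans (finCongr hEq)) (finSumFinEquiv.trans (finCongr hEq))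
      (Matrix.fromBlocks ((Complex.I / 2) • cC (Omega (n-m))) 0 0
        ((1/2 : ℂ) • (1 : Matrix (Fin (2*m)) (Fin (2*m)) ℂ)))
    - (Complex.I / 2) • cC (Omega n)

lemma S_entry (k l : Fin n) (s t : Fin 2) :
    Smat n m hEq (pe n (k,s)) (pe n (l,t))
    = if k = l ∧ n - m ≤ (k:ℕ) then Tm s t else 0 := by
  rw [Smat]
  have hs2 := s.isLt
  have ht2 := t.isLt
  have hOm : ∀ (a : ℕ) (i j : Fin (2*a)), Omega a i j =
      (if (i:ℕ) + 1 = (j:ℕ) ∧ (i:ℕ) % 2 = 0 then (1:ℝ)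
        else if (j:ℕ) + 1 = (i:ℕ) ∧ (j:ℕ) % 2 = 0 then -1 else 0) := fun a i j => rfl
  rw [Matrix.sub_apply, Matrix.reindex_apply, Matrix.submatrix_apply]
  by_cases hk : (k : ℕ) < n - m
  · have hi : ((pe n (k,s) : Fin (2*n)) : ℕ) < 2*(n-m) := by rw [pe_val]; omega
    rw [e2_symm_lt hEq _ hi]
    by_cases hl : (l : ℕ) < n - m
    · have hj : ((pe n (l,t) : Fin (2*n)) : ℕ) < 2*(n-m) := by rw [pe_val]; omega
      rw [e2_symm_lt hEq _ hj]
      rw [Matrix.fromBlocks_apply₁₁, if_neg (by omega)]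
      simp only [Matrix.smul_apply, cC, Matrix.map_apply, hOm, pe_val]
      norm_num
    · have hj : 2*(n-m) ≤ ((pe n (l,t) : Fin (2*n)) : ℕ) := by rw [pe_val]; omega
      rw [e2_symm_ge hEq _ hj]
      rw [Matrix.fromBlocks_apply₁₂, if_neg (by omega)]
      simp only [Matrix.smul_apply, cC, Matrix.map_apply, hOm, pe_val', Matrix.zero_apply]
      rw [if_neg (by omega), if_neg (by omega)]
      norm_num
  · have hi : 2*(n-m) ≤ ((pe n (k,s) : Fin (2*n)) : ℕ) := by rw [pe_val]; omega
    rw [e2_symm_ge hEq _ hi]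
    by_cases hl : (l : ℕ) < n - m
    · have hj : ((pe n (l,t) : Fin (2*n)) : ℕ) < 2*(n-m) := by rw [pe_val]; omega
      rw [e2_symm_lt hEq _ hj]
      rw [Matrix.fromBlocks_apply₂₁, if_neg (by omega)]
      simp only [Matrix.smul_apply, cC, Matrix.map_apply, hOm, pe_val', Matrix.zero_apply]
      rw [if_neg (by omega), if_neg (by omega)]
      norm_num
    · have hj : 2*(n-m) ≤ ((pe n (l,t) : Fin (2*n)) : ℕ) := by rw [pe_val]; omega
      rw [e2_symm_ge hEq _ hj]
      rw [Matrix.fromBlocks_apply₂₂]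
      simp only [Matrix.smul_apply, cC, Matrix.map_apply, hOm, pe_val', Matrix.one_apply,
        smul_eq_mul]
      by_cases hkl : k = l
      · subst hkl
        rw [if_pos (show k = k ∧ n - m ≤ (k:ℕ) from ⟨rfl, by omega⟩)]
        fin_cases s <;> fin_cases t
        · rw [if_pos rfl,
            if_neg (by simp only [Fin.val_zero]; omega),
            if_neg (by simp only [Fin.val_zero]; omega)]
          simp [Tm]
        · rw [if_neg (by simp only [Fin.mk.injEq, Fin.val_zero, Fin.val_one]; omega),
            if_pos (show _ ∧ _ from by constructor <;> simp only [Fin.val_zero, Fin.val_one] <;> omega)]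
          simp [Tm]
          try ring
        · rw [if_neg (by simp only [Fin.mk.injEq, Fin.val_zero, Fin.val_one]; omega),
            if_neg (by simp only [Fin.val_zero, Fin.val_one]; omega),
            if_pos (show _ ∧ _ from by constructor <;> simp only [Fin.val_zero, Fin.val_one] <;> omega)]
          simp [Tm]
          try ring
        · rw [if_pos rfl,
            if_neg (by simp only [Fin.val_one]; omega),
            if_neg (by simp only [Fin.val_one]; omega)]
          simp [Tm]
      · have hkl' : (k : ℕ) ≠ (l : ℕ) := fun hh => hkl (Fin.ext hh)
        rw [if_neg (by simp only [Fin.mk.injEq]; omega),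
          if_neg (by omega), if_neg (by omega),
          if_neg (fun hc => hkl hc.1)]
        norm_num


lemma Smat_mulVec (x : Fin (2*n) → ℂ) (k : Fin n) (s : Fin 2) :
    (Smat n m hEq *ᵥ x) (pe n (k,s)) =
      if n - m ≤ (k:ℕ) then
        Tm s 0 * x (pe n (k,0)) + Tm s 1 * x (pe n (k,1)) else 0 := by
  show (fun j => Smat n m hEq (pe n (k,s)) j) ⬝ᵥ x = _
  rw [dotProduct]
  rw [← Equiv.sum_comp (pe n) (fun j => Smat n m hEq (pe n (k,s)) j * x j)]
  rw [Fintype.sum_prod_type]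
  by_cases hc : n - m ≤ (k:ℕ)
  · rw [if_pos hc]
    rw [Finset.sum_eq_single k]
    · have hcong : ∀ t' : Fin 2, Smat n m hEq (pe n (k,s)) (pe n (k,t')) * x (pe n (k,t'))
          = Tm s t' * x (pe n (k,t')) := by
        intro t'
        rw [S_entry hEq, if_pos ⟨rfl, hc⟩]
      rw [Finset.sum_congr rfl fun t' _ => hcong t', Fin.sum_univ_two]
    · intro l _ hlk
      have hne : ¬(k = l ∧ n - m ≤ (k:ℕ)) := fun h => hlk h.1.symm
      refine Finset.sum_eq_zero fun t' _ => ?_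
      rw [S_entry hEq, if_neg hne, zero_mul]
    · intro h
      exact absurd (Finset.mem_univ k) h
  · rw [if_neg hc]
    refine Finset.sum_eq_zero fun l _ => Finset.sum_eq_zero fun t' _ => ?_
    rw [S_entry hEq, if_neg (fun h => hc h.2), zero_mul]

lemma Smat_mulVec_zero (x : Fin (2*n) → ℂ)
    (hx : ∀ k : Fin n, n - m ≤ (k:ℕ) → x (pe n (k,0)) = Complex.I * x (pe n (k,1))) :
    Smat n m hEq *ᵥ x = 0 := by
  funext i
  obtain ⟨⟨k,s⟩, rfl⟩ := (pe n).surjective i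
  rw [Smat_mulVec hEq]
  by_cases hc : n - m ≤ (k:ℕ)
  · rw [if_pos hc, hx k hc]
    have hI : Complex.I * Complex.I = -1 := Complex.I_mul_I
    fin_cases s <;> simp [Tm] <;> ring_nf <;>
      simp [Complex.I_sq] <;> ring
  · rw [if_neg hc]
    simp

lemma quad_nonneg (a b : ℂ) :
    0 ≤ ((starRingEnd ℂ) a * (1/2 * a + -Complex.I/2 * b)).re
      + ((starRingEnd ℂ) b * (Complex.I/2 * a + 1/2 * b)).re := by
  rw [← Complex.add_re]
  have key : (starRingEnd ℂ) a * (1/2 * a + -Complex.I/2*b)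
      + (starRingEnd ℂ) b * (Complex.I/2*a + 1/2*b)
      = 1/2 * ((a - Complex.I*b) * (starRingEnd ℂ) (a - Complex.I*b)) := by
    rw [map_sub, _root_.map_mul, Complex.conj_I]
    ring_nf
    rw [Complex.I_sq]
    ring
  rw [key, Complex.mul_conj]
  rw [show ((1:ℂ)/2 * ((Complex.normSq (a - Complex.I*b) : ℝ) : ℂ))
      = (((Complex.normSq (a - Complex.I*b) / 2 : ℝ)) : ℂ) by push_cast; ring]
  rw [Complex.ofReal_re]
  have := Complex.normSq_nonneg (a - Complex.I*b)
  linarith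

lemma Smat_nonneg (x : Fin (2*n) → ℂ) :
    0 ≤ (star x ⬝ᵥ (Smat n m hEq *ᵥ x)).re := by
  rw [dotProduct]
  rw [← Equiv.sum_comp (pe n) (fun j => star x j * (Smat n m hEq *ᵥ x) j)]
  rw [Fintype.sum_prod_type, Complex.re_sum]
  refine Finset.sum_nonneg fun k _ => ?_
  rw [Complex.re_sum]
  by_cases hc : n - m ≤ (k:ℕ)
  · have hterm : ∀ s : Fin 2, star x (pe n (k,s)) * (Smat n m hEq *ᵥ x) (pe n (k,s))
        = (starRingEnd ℂ) (x (pe n (k,s)))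
          * (Tm s 0 * x (pe n (k,0)) + Tm s 1 * x (pe n (k,1))) := by
      intro s
      rw [Smat_mulVec hEq, if_pos hc]
      rfl
    rw [Finset.sum_congr rfl fun s _ => congrArg Complex.re (hterm s), Fin.sum_univ_two]
    have h0 := quad_nonneg (x (pe n (k,0))) (x (pe n (k,1)))
    simpa [Tm] using h0
  · refine Finset.sum_nonneg fun s _ => ?_
    rw [Smat_mulVec hEq, if_neg hc, mul_zero]
    simp



lemma cC_mul {m : Type*} [Fintype m] (M N : Matrix m m ℝ) : cC (M * N) = cC M * cC N := by
  show (M * N).map (Complex.ofRealHom : ℝ →+* ℂ) = _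
  rw [Matrix.map_mul]; rfl

lemma cC_one {m : Type*} [Fintype m] [DecidableEq m] : cC (1 : Matrix m m ℝ) = 1 := by
  show (1 : Matrix m m ℝ).map (Complex.ofRealHom : ℝ →+* ℂ) = 1
  rw [Matrix.map_one] <;> simp

lemma cC_transpose {m : Type*} (M : Matrix m m ℝ) : (cC M)ᵀ = cC Mᵀ := rfl

lemma cC_conjTranspose {m : Type*} (M : Matrix m m ℝ) : (cC M)ᴴ = cC Mᵀ := by
  ext i j
  simp [cC, Matrix.conjTranspose_apply, Complex.conj_ofReal]

variable {N : Type*} [Fintype N] [DecidableEq N]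

lemma dot_conj (V M : Matrix N N ℂ) (x : N → ℂ) :
    star x ⬝ᵥ ((V * M * Vᴴ) *ᵥ x) = star (Vᴴ *ᵥ x) ⬝ᵥ (M *ᵥ (Vᴴ *ᵥ x)) := by
  have h1 : star (Vᴴ *ᵥ x) = star x ᵥ* V := by
    rw [star_mulVec, conjTranspose_conjTranspose]
  rw [h1, ← mulVec_mulVec, ← mulVec_mulVec, dotProduct_mulVec]

lemma dot_norm_conj {V : Matrix N N ℂ} (hV : V * Vᴴ = 1) (x : N → ℂ) :
    star (Vᴴ *ᵥ x) ⬝ᵥ (Vᴴ *ᵥ x) = star x ⬝ᵥ x := by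
  have := dot_conj V 1 x
  rw [mul_one, hV, one_mulVec, one_mulVec] at this
  exact this.symm

lemma conj_mul_self_re (a : ℂ) : (star a * a).re = Complex.normSq a := by
  simp [Complex.star_def, Complex.mul_re, Complex.normSq_apply]

lemma conj_mul_smul_re (c : ℝ) (a : ℂ) : (star a * ((c : ℂ) * a)).re = c * Complex.normSq a := by
  simp [Complex.star_def, Complex.mul_re, Complex.mul_im, Complex.normSq_apply]
  ring

lemma re_dot_eq (x : N → ℂ) : (star x ⬝ᵥ x).re = ∑ i, Complex.normSq (x i) := by
  simp only [dotProduct, Pi.star_apply, Complex.re_sum]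
  exact Finset.sum_congr rfl fun i _ => conj_mul_self_re (x i)

lemma re_dot_pos {x : N → ℂ} (hx : x ≠ 0) : 0 < (star x ⬝ᵥ x).re := by
  rw [re_dot_eq]
  have : ∃ i, x i ≠ 0 := by
    by_contra h
    push_neg at h
    exact hx (funext h)
  obtain ⟨i, hi⟩ := this
  exact Finset.sum_pos' (fun j _ => Complex.normSq_nonneg _)
    ⟨i, Finset.mem_univ i, Complex.normSq_pos.mpr hi⟩

lemma rayleigh_min [Nonempty N] {A : Matrix N N ℂ} (hA : A.IsHermitian) (x : N → ℂ) :
    (⨅ i, hA.eigenvalues i) * (star x ⬝ᵥ x).re ≤ (star x ⬝ᵥ (A *ᵥ x)).re := by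
  classical
  set V : Matrix N N ℂ := (hA.eigenvectorUnitary : Matrix N N ℂ) with hVdef
  have hV : V * Vᴴ = 1 := (Matrix.mem_unitaryGroup_iff).mp hA.eigenvectorUnitary.2
  set y := Vᴴ *ᵥ x with hy
  have hAx : star x ⬝ᵥ (A *ᵥ x)
      = star y ⬝ᵥ ((Matrix.diagonal (RCLike.ofReal ∘ hA.eigenvalues)) *ᵥ y) := by
    conv_lhs => rw [hA.spectral_theorem]
    exact dot_conj _ _ _
  have hxy : (star x ⬝ᵥ x).re = ∑ i, Complex.normSq (y i) := by
    rw [← dot_norm_conj hV x, re_dot_eq]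
  have hAy : (star y ⬝ᵥ ((Matrix.diagonal (RCLike.ofReal ∘ hA.eigenvalues)) *ᵥ y)).re
      = ∑ i, hA.eigenvalues i * Complex.normSq (y i) := by
    simp only [dotProduct, mulVec_diagonal, Pi.star_apply, Complex.re_sum]
    exact Finset.sum_congr rfl fun i _ => conj_mul_smul_re (hA.eigenvalues i) (y i)
  rw [hAx, hAy, hxy, Finset.mul_sum]
  refine Finset.sum_le_sum fun i _ => ?_
  refine mul_le_mul_of_nonneg_right ?_ (Complex.normSq_nonneg _)
  exact ciInf_le (Finite.bddBelow_range _) i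

lemma iInf_attained [Nonempty N] (f : N → ℝ) : ∃ i₀, (⨅ i, f i) = f i₀ ∧ ∀ j, f i₀ ≤ f j := by
  obtain ⟨i₀, hi₀⟩ := Finite.exists_min f
  exact ⟨i₀, le_antisymm (ciInf_le (Finite.bddBelow_range _) i₀) (le_ciInf hi₀), hi₀⟩



lemma exists_unitary (n : ℕ) (hn : 0 < n) (γ : Fin n → ℂ) :
    ∃ U : Matrix (Fin n) (Fin n) ℂ, U * Uᴴ = 1 ∧
      ∀ k : Fin n, k ≠ ⟨0, hn⟩ → (U *ᵥ γ) k = 0 := by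
  by_cases hγ : γ = 0
  · exact ⟨1, by simp, fun k _ => by simp [hγ]⟩
  · set i₀ : Fin n := ⟨0, hn⟩
    set ξ : EuclideanSpace ℂ (Fin n) := (WithLp.equiv 2 (Fin n → ℂ)).symm γ with hξdef
    have hξ : ∀ l, ξ l = γ l := fun l => rfl
    have hξ0 : ξ ≠ 0 := by
      intro h
      apply hγ
      funext l
      rw [← hξ l, h]
      rfl
    set c : ℂ := (‖ξ‖ : ℂ) with hcdef
    have hc : c ≠ 0 := by
      simp only [hcdef, ne_eq, Complex.ofReal_eq_zero, norm_eq_zero]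
      exact hξ0
    set g : EuclideanSpace ℂ (Fin n) := c⁻¹ • ξ with hgdef
    have hg : ‖g‖ = 1 := by
      rw [hgdef, norm_smul, norm_inv, hcdef, Complex.norm_real, Real.norm_eq_abs,
        abs_of_nonneg (norm_nonneg _), inv_mul_cancel₀ (norm_ne_zero_iff.mpr hξ0)]
    have horth : Orthonormal ℂ (({i₀} : Set (Fin n)).restrict (fun _ => g)) := by
      constructor
      · intro i; exact hg
      · intro i j hij
        exact absurd (Subtype.ext (i.2.trans j.2.symm)) hij
    obtain ⟨b, hb⟩ := horth.exists_orthonormalBasis_extension_of_card_eq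
      (by simp [finrank_euclideanSpace])
    have hbi₀ : b i₀ = g := hb i₀ rfl
    refine ⟨Matrix.of fun k l => star (b k l), ?_, ?_⟩
    · ext k l
      rw [Matrix.mul_apply]
      have : ∀ j, (Matrix.of fun k l => star (b k l)) k j
          * ((Matrix.of fun k l => star (b k l))ᴴ) j l
          = (starRingEnd ℂ) (b k j) * (b l j) := by
        intro j
        simp [Matrix.conjTranspose_apply]
      rw [Finset.sum_congr rfl fun j _ => this j]
      have hinner : (inner ℂ (b k) (b l) : ℂ) = ∑ j, (starRingEnd ℂ) (b k j) * (b l j) := by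
        rw [PiLp.inner_apply]
        simp [RCLike.inner_apply, mul_comm]
      rw [← hinner, orthonormal_iff_ite.mp b.orthonormal k l]
      simp [Matrix.one_apply, eq_comm]
    · intro k hk
      have : (Matrix.of (fun k l => star (b k l)) *ᵥ γ) k
          = (inner ℂ (b k) ξ : ℂ) := by
        rw [PiLp.inner_apply]
        simp only [Matrix.mulVec, dotProduct, Matrix.of_apply, RCLike.inner_apply]
        exact Finset.sum_congr rfl fun i _ => mul_comm _ _
      rw [this]
      have hξg : ξ = c • g := by
        rw [hgdef, smul_smul, mul_inv_cancel₀ hc, one_smul]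
      rw [hξg, inner_smul_right, ← hbi₀,
        orthonormal_iff_ite.mp b.orthonormal k i₀, if_neg hk, mul_zero]


end SER
namespace SER

lemma Omega_transpose (n : ℕ) : (Omega n)ᵀ = -(Omega n) := by
  ext i j
  simp only [Matrix.transpose_apply, Matrix.neg_apply, Omega, Matrix.of_apply]
  split_ifs <;> first | (exfalso; omega) | norm_num

lemma cC_neg {m : Type*} (M : Matrix m m ℝ) : cC (-M) = -(cC M) := by
  ext i j
  simp [cC]

theorem main_thm (n m : ℕ) (hn : 2 ≤ n) (hm : 1 ≤ m) (hmn : m < n)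
    (H : Matrix (Fin (2*n)) (Fin (2*n)) ℂ) (hH : H.IsHermitian) :
    ∃ Q : Matrix (Fin (2*n)) (Fin (2*n)) ℝ,
      Q * Qᵀ = 1 ∧ Q * Omega n * Qᵀ = Omega n ∧
      ∀ (h1 : ((Complex.I / 2) • cC (Omega n) + H).IsHermitian)
        (h2 : ((Matrix.reindex
                  (finSumFinEquiv.trans (finCongr (by have := hmn; omega : 2*(n-m) + 2*m = 2*n)))
                  (finSumFinEquiv.trans (finCongr (by have := hmn; omega : 2*(n-m) + 2*m = 2*n)))
                  (Matrix.fromBlocks ((Complex.I / 2) • cC (Omega (n-m))) 0 0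
                    ((1/2 : ℂ) • (1 : Matrix (Fin (2*m)) (Fin (2*m)) ℂ))))
              + cC Q * H * (cC Q)ᵀ).IsHermitian),
        (⨅ i, h1.eigenvalues i) = (⨅ i, h2.eigenvalues i) := by
  classical
  have h2n : (0:ℕ) < 2*n := by omega
  haveI : Nonempty (Fin (2*n)) := ⟨⟨0, h2n⟩⟩
  have hEq : 2*(n-m) + 2*m = 2*n := by omega
  -- Hermitian-ness of A
  have hA : ((Complex.I / 2) • cC (Omega n) + H).IsHermitian := by
    have hfirst : ((Complex.I / 2) • cC (Omega n)).IsHermitian := by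
      show ((Complex.I / 2) • cC (Omega n))ᴴ = _
      rw [Matrix.conjTranspose_smul, cC_conjTranspose, Omega_transpose, cC_neg]
      have hc : (star (Complex.I / 2) : ℂ) = -(Complex.I / 2) := by
        simp [Complex.ext_iff]
        norm_num
      rw [hc, smul_neg, neg_smul, neg_neg]
    exact hfirst.add hH
  -- ground eigenvector
  obtain ⟨i₁, hi₁, hi₁min⟩ := iInf_attained hA.eigenvalues
  set v : Fin (2*n) → ℂ := ⇑(hA.eigenvectorBasis i₁) with hvdef
  have hv : ((Complex.I / 2) • cC (Omega n) + H) *ᵥ v = hA.eigenvalues i₁ • v :=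
    hA.mulVec_eigenvectorBasis i₁
  have hv0 : v ≠ 0 := by
    have hne := hA.eigenvectorBasis.orthonormal.ne_zero i₁
    intro h
    exact hne ((WithLp.ofLp_eq_zero 2).mp h)
  set γ : Fin n → ℂ :=
    fun l => (starRingEnd ℂ) (v (pe n (l,0)) - Complex.I * v (pe n (l,1))) with hγdef
  obtain ⟨U, hU, hUγ⟩ := exists_unitary n (by omega) γ
  set Q := Matrix.reindex (pe n) (pe n) (Rm U) with hQdef
  have hQt : Qᵀ = Matrix.reindex (pe n) (pe n) (Rm Uᴴ) := by
    rw [hQdef, Matrix.transpose_reindex, Rm_transpose]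
  have hmulQ : ∀ M N : Matrix (Fin n × Fin 2) (Fin n × Fin 2) ℝ,
      (Matrix.reindex (pe n) (pe n) M) * (Matrix.reindex (pe n) (pe n) N)
        = Matrix.reindex (pe n) (pe n) (M*N) := by
    intro M N
    rw [Matrix.reindex_apply, Matrix.reindex_apply, Matrix.reindex_apply,
      Matrix.submatrix_mul_equiv]
  have hQQ : Q * Qᵀ = 1 := by
    rw [hQdef, hQt, hmulQ, Rm_mul, hU, Rm_one, Matrix.reindex_apply,
      Matrix.submatrix_one_equiv]
  have hQΩ : Q * Omega n * Qᵀ = Omega n := by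
    rw [Omega_eq n, hQdef, hQt, hmulQ, hmulQ, Rm_mul, Rm_mul]
    congr 2
    rw [Matrix.mul_smul, Matrix.smul_mul, mul_one, hU]
  refine ⟨Q, hQQ, hQΩ, ?_⟩
  intro h1 h2
  -- algebra facts
  have hQc : cC Q * (cC Q)ᵀ = 1 := by rw [cC_transpose, ← cC_mul, hQQ, cC_one]
  have hQH : (cC Q)ᴴ = (cC Q)ᵀ := by rw [cC_conjTranspose, cC_transpose]
  have hQc2 : (cC Q)ᵀ * cC Q = 1 := mul_eq_one_comm.mp hQc
  have hconj : cC Q * ((Complex.I / 2) • cC (Omega n)) * (cC Q)ᵀ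
      = (Complex.I / 2) • cC (Omega n) := by
    rw [Matrix.mul_smul, Matrix.smul_mul, cC_transpose, ← cC_mul, ← cC_mul, hQΩ]
  have hB : (Matrix.reindex
        (finSumFinEquiv.trans (finCongr hEq)) (finSumFinEquiv.trans (finCongr hEq))
        (Matrix.fromBlocks ((Complex.I / 2) • cC (Omega (n-m))) 0 0
          ((1/2 : ℂ) • (1 : Matrix (Fin (2*m)) (Fin (2*m)) ℂ))))
        + cC Q * H * (cC Q)ᵀ
      = cC Q * ((Complex.I / 2) • cC (Omega n) + H) * (cC Q)ᵀ + Smat n m hEq := by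
    rw [Smat, Matrix.mul_add, Matrix.add_mul, hconj]
    abel
  -- the transformed ground vector satisfies the kernel condition
  have hentry : ∀ (k : Fin n) (s : Fin 2), (cC Q *ᵥ v) (pe n (k,s))
      = ∑ l : Fin n, (((Rm U (k,s) (l,0) : ℝ) : ℂ) * v (pe n (l,0))
          + ((Rm U (k,s) (l,1) : ℝ) : ℂ) * v (pe n (l,1))) := by
    intro k s
    show (fun j => cC Q (pe n (k,s)) j) ⬝ᵥ v = _
    rw [dotProduct, ← Equiv.sum_comp (pe n) (fun j => cC Q (pe n (k,s)) j * v j),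
      Fintype.sum_prod_type]
    refine Finset.sum_congr rfl fun l _ => ?_
    rw [Fin.sum_univ_two]
    have hcc : ∀ t : Fin 2, cC Q (pe n (k,s)) (pe n (l,t)) = ((Rm U (k,s) (l,t) : ℝ) : ℂ) := by
      intro t
      simp [hQdef, cC, Matrix.reindex_apply, Matrix.submatrix_apply, Equiv.symm_apply_apply]
    rw [hcc 0, hcc 1]
  have hconj_eq : ∀ u a b : ℂ,
      ((u.re : ℝ) : ℂ) * a + ((-u.im : ℝ) : ℂ) * b
        - Complex.I * (((u.im : ℝ) : ℂ) * a + ((u.re : ℝ) : ℂ) * b)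
      = (starRingEnd ℂ) u * (a - Complex.I * b) := by
    intro u a b
    have hcu : (starRingEnd ℂ) u = ((u.re : ℝ) : ℂ) - ((u.im : ℝ) : ℂ) * Complex.I := by
      apply Complex.ext <;> simp
    rw [hcu]
    push_cast
    ring_nf
    rw [Complex.I_sq]
    ring
  have hx₀ : ∀ k : Fin n, n - m ≤ (k:ℕ) →
      (cC Q *ᵥ v) (pe n (k,0)) = Complex.I * ((cC Q *ᵥ v) (pe n (k,1))) := by
    intro k hk
    have hk0 : k ≠ (⟨0, by omega⟩ : Fin n) := by
      intro h
      have : (k : ℕ) = 0 := congrArg Fin.val h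
      omega
    have hsub : (cC Q *ᵥ v) (pe n (k,0)) - Complex.I * ((cC Q *ᵥ v) (pe n (k,1)))
        = (starRingEnd ℂ) ((U *ᵥ γ) k) := by
      rw [hentry k 0, hentry k 1, Finset.mul_sum, ← Finset.sum_sub_distrib]
      have hterm : ∀ l : Fin n,
          (((Rm U (k,(0:Fin 2)) (l,0) : ℝ) : ℂ) * v (pe n (l,0))
            + ((Rm U (k,(0:Fin 2)) (l,1) : ℝ) : ℂ) * v (pe n (l,1)))
          - Complex.I * (((Rm U (k,(1:Fin 2)) (l,0) : ℝ) : ℂ) * v (pe n (l,0))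
            + ((Rm U (k,(1:Fin 2)) (l,1) : ℝ) : ℂ) * v (pe n (l,1)))
          = (starRingEnd ℂ) (U k l * γ l) := by
        intro l
        have h00 : Rm U (k,(0:Fin 2)) (l,(0:Fin 2)) = (U k l).re := rfl
        have h01 : Rm U (k,(0:Fin 2)) (l,(1:Fin 2)) = -(U k l).im := rfl
        have h10 : Rm U (k,(1:Fin 2)) (l,(0:Fin 2)) = (U k l).im := rfl
        have h11 : Rm U (k,(1:Fin 2)) (l,(1:Fin 2)) = (U k l).re := rfl
        rw [h00, h01, h10, h11, hconj_eq]
        rw [_root_.map_mul]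
        congr 1
        rw [hγdef]
        exact (Complex.conj_conj _).symm
      rw [Finset.sum_congr rfl fun l _ => hterm l, ← map_sum]
      rfl
    rw [hUγ k hk0, map_zero, sub_eq_zero] at hsub
    exact hsub
  have hSx : Smat n m hEq *ᵥ (cC Q *ᵥ v) = 0 := Smat_mulVec_zero hEq _ hx₀
  -- Direction 1 : ⨅ h2 ≤ ⨅ h1
  set x₀ := cC Q *ᵥ v with hx₀def
  have hVV : (cC Q)ᴴ * ((cC Q)ᴴ)ᴴ = 1 := by
    rw [Matrix.conjTranspose_conjTranspose, hQH, hQc2]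
  have hx₀n : star x₀ ⬝ᵥ x₀ = star v ⬝ᵥ v := by
    have := dot_norm_conj hVV v
    rw [Matrix.conjTranspose_conjTranspose] at this
    exact this
  have hpull : ((cC Q)ᴴ) *ᵥ x₀ = v := by
    rw [hx₀def, Matrix.mulVec_mulVec, hQH, hQc2, Matrix.one_mulVec]
  have hBx₀ : star x₀ ⬝ᵥ
      (((Matrix.reindex
        (finSumFinEquiv.trans (finCongr hEq)) (finSumFinEquiv.trans (finCongr hEq))
        (Matrix.fromBlocks ((Complex.I / 2) • cC (Omega (n-m))) 0 0
          ((1/2 : ℂ) • (1 : Matrix (Fin (2*m)) (Fin (2*m)) ℂ))))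
        + cC Q * H * (cC Q)ᵀ) *ᵥ x₀)
      = hA.eigenvalues i₁ • (star v ⬝ᵥ v) := by
    rw [hB, Matrix.add_mulVec, dotProduct_add, hSx, dotProduct_zero, add_zero]
    rw [← hQH, dot_conj, hpull, hv, dotProduct_smul]
  have hc₁ : 0 < (star v ⬝ᵥ v).re := re_dot_pos hv0
  have hd1 : (⨅ i, h2.eigenvalues i) ≤ (⨅ i, h1.eigenvalues i) := by
    have hr := rayleigh_min h2 x₀
    rw [hBx₀] at hr
    rw [hx₀n] at hr
    have hsm : ((hA.eigenvalues i₁ : ℝ) • (star v ⬝ᵥ v)).re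
        = hA.eigenvalues i₁ * (star v ⬝ᵥ v).re := by
      rw [Complex.real_smul, Complex.mul_re]
      simp
    rw [hsm] at hr
    have hconv : (⨅ i, h1.eigenvalues i) = hA.eigenvalues i₁ := hi₁
    rw [hconv]
    exact le_of_mul_le_mul_right (by linarith) hc₁
  -- Direction 2 : ⨅ h1 ≤ ⨅ h2
  obtain ⟨i₂, hi₂, _⟩ := iInf_attained h2.eigenvalues
  set w : Fin (2*n) → ℂ := ⇑(h2.eigenvectorBasis i₂) with hwdef
  have hw : _ *ᵥ w = h2.eigenvalues i₂ • w := h2.mulVec_eigenvectorBasis i₂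
  have hw0 : w ≠ 0 := by
    have hne := h2.eigenvectorBasis.orthonormal.ne_zero i₂
    intro h
    exact hne ((WithLp.ofLp_eq_zero 2).mp h)
  set z := (cC Q)ᴴ *ᵥ w with hzdef
  have hzn : star z ⬝ᵥ z = star w ⬝ᵥ w := by
    have hQc' : cC Q * (cC Q)ᴴ = 1 := by rw [hQH, hQc]
    exact dot_norm_conj hQc' w
  have hsplit : star w ⬝ᵥ
      (((Matrix.reindex
        (finSumFinEquiv.trans (finCongr hEq)) (finSumFinEquiv.trans (finCongr hEq))
        (Matrix.fromBlocks ((Complex.I / 2) • cC (Omega (n-m))) 0 0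
          ((1/2 : ℂ) • (1 : Matrix (Fin (2*m)) (Fin (2*m)) ℂ))))
        + cC Q * H * (cC Q)ᵀ) *ᵥ w)
      = star z ⬝ᵥ (((Complex.I / 2) • cC (Omega n) + H) *ᵥ z)
        + star w ⬝ᵥ (Smat n m hEq *ᵥ w) := by
    rw [hB, Matrix.add_mulVec, dotProduct_add]
    congr 1
    rw [← hQH, dot_conj, hzdef]
  have hd2 : (⨅ i, h1.eigenvalues i) ≤ (⨅ i, h2.eigenvalues i) := by
    have hr := rayleigh_min h1 z
    rw [hzn] at hr
    have hSnn := Smat_nonneg hEq w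
    have hwB : star w ⬝ᵥ
        (((Matrix.reindex
          (finSumFinEquiv.trans (finCongr hEq)) (finSumFinEquiv.trans (finCongr hEq))
          (Matrix.fromBlocks ((Complex.I / 2) • cC (Omega (n-m))) 0 0
            ((1/2 : ℂ) • (1 : Matrix (Fin (2*m)) (Fin (2*m)) ℂ))))
          + cC Q * H * (cC Q)ᵀ) *ᵥ w)
        = h2.eigenvalues i₂ • (star w ⬝ᵥ w) := by
      rw [hw, dotProduct_smul]
    rw [hwB] at hsplit
    have hre : h2.eigenvalues i₂ * (star w ⬝ᵥ w).re
        = (star z ⬝ᵥ (((Complex.I / 2) • cC (Omega n) + H) *ᵥ z)).re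
          + (star w ⬝ᵥ (Smat n m hEq *ᵥ w)).re := by
      have := congrArg Complex.re hsplit
      rw [Complex.add_re] at this
      rw [← this, Complex.real_smul, Complex.mul_re]
      simp
    have hcw : 0 < (star w ⬝ᵥ w).re := re_dot_pos hw0
    have hconv : (⨅ i, h2.eigenvalues i) = h2.eigenvalues i₂ := hi₂
    rw [hconv]
    exact le_of_mul_le_mul_right (by linarith) hcw
  exact le_antisymm hd2 hd1

end SER


/-- **Lemma 1.** For any `2n × 2n` Hermitian matrix `H` and any `1 ≤ m < n`, there
exists a real orthogonal symplectic matrix `Q` such that the smallest eigenvalue of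
`(i/2)Ω_n + H` equals the smallest eigenvalue of
`((i/2)Ω_{n-m} ⊕ (1/2)·1_{2m}) + Q H Qᵀ`. -/
theorem smallest_eigenvalue_reduction (n m : ℕ) (hn : 2 ≤ n) (hm : 1 ≤ m) (hmn : m < n)
    (H : Matrix (Fin (2*n)) (Fin (2*n)) ℂ) (hH : H.IsHermitian) :
    ∃ Q : Matrix (Fin (2*n)) (Fin (2*n)) ℝ,
      Q * Qᵀ = 1 ∧ Q * Omega n * Qᵀ = Omega n ∧
      ∀ (h1 : ((Complex.I / 2) • cC (Omega n) + H).IsHermitian)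
        (h2 : ((Matrix.reindex
                  (finSumFinEquiv.trans (finCongr (by omega : 2*(n-m) + 2*m = 2*n)))
                  (finSumFinEquiv.trans (finCongr (by omega : 2*(n-m) + 2*m = 2*n)))
                  (Matrix.fromBlocks ((Complex.I / 2) • cC (Omega (n-m))) 0 0
                    ((1/2 : ℂ) • (1 : Matrix (Fin (2*m)) (Fin (2*m)) ℂ))))
              + cC Q * H * (cC Q)ᵀ).IsHermitian),
        (⨅ i, h1.eigenvalues i) = (⨅ i, h2.eigenvalues i) := by
  exact SER.main_thm n m hn hm hmn H hH
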